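/- (Difference of robust operators.) Let S and A be finite nonempty sets and for each (s,a) let 𝒫^a_s ⊆ Δ(S) be nonempty, compact, and convex. Then for any V₁, V₂ : S → ℝ and each (s,a), there exists p*_{s,a} ∈ 𝒫^a_s such that σ_{𝒫^a_s}(V₁) − σ_{𝒫^a_s}(V₂) = ∑_{s'} p*_{s,a}(s') (V₁(s') − V₂(s')). Consequently, for any policy π : S → Δ(A), the stochastic matrix P* with entries P*_{s,s'} = ∑_a π(a|s) p*_{s,a}(s') satisfies σ^π(V₁)(s) − σ^π(V₂)(s) = (P*(V₁ − V₂))(s) for every s, where σ^π(V)(s) = ∑_a π(a|s) σ_{𝒫^a_s}(V). -/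
import Mathlib


open scoped BigOperators

/-- Support function `σ_Q(V) = min_{p ∈ Q} ∑_{s'} p(s') V(s')` (as an infimum,
which is attained when `Q` is nonempty and compact). -/
noncomputable def suppF {S : Type*} [Fintype S] (Q : Set (S → ℝ)) (V : S → ℝ) : ℝ :=
  sInf ((fun p => ∑ s', p s' * V s') '' Q)

lemma suppF_isLeast {S : Type*} [Fintype S] {Q : Set (S → ℝ)} (hne : Q.Nonempty)
    (hc : IsCompact Q) (V : S → ℝ) :
    ∃ p ∈ Q, (∑ s', p s' * V s') = suppF Q V ∧
      ∀ q ∈ Q, (∑ s', p s' * V s') ≤ ∑ s', q s' * V s' := by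
  have hcont : Continuous fun p : S → ℝ => ∑ s', p s' * V s' :=
    continuous_finset_sum _ fun s' _ => (continuous_apply s').mul continuous_const
  obtain ⟨p, hp, hmin⟩ := hc.exists_isMinOn hne hcont.continuousOn
  refine ⟨p, hp, ?_, fun q hq => hmin hq⟩
  have hL : IsLeast ((fun p => ∑ s', p s' * V s') '' Q) (∑ s', p s' * V s') :=
    ⟨⟨p, hp, rfl⟩, by rintro _ ⟨q, hq, rfl⟩; exact hmin hq⟩
  exact hL.csInf_eq.symm

/-- **Difference of robust operators.** For nonempty compact
convex uncertainty sets, the difference of support functions at `V₁` and `V₂`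
is realized by some kernel: pointwise by some `p*_{s,a} ∈ U^a_s`, and, for a
policy `π`, by the induced stochastic matrix `P*`. -/
theorem stmt18 {S A : Type*} [Fintype S] [Nonempty S] [Fintype A] [Nonempty A]
    (U : S → A → Set (S → ℝ))
    (hU : ∀ s a, (U s a).Nonempty ∧ IsCompact (U s a) ∧ Convex ℝ (U s a) ∧
      U s a ⊆ stdSimplex ℝ S)
    (V₁ V₂ : S → ℝ) :
    ∃ pstar : S → A → (S → ℝ),
      (∀ s a, pstar s a ∈ U s a) ∧
      (∀ s a, suppF (U s a) V₁ - suppF (U s a) V₂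
        = ∑ s', pstar s a s' * (V₁ s' - V₂ s')) ∧
      (∀ π : S → A → ℝ, (∀ s, π s ∈ stdSimplex ℝ A) → ∀ s,
        (∑ a, π s a * suppF (U s a) V₁) - (∑ a, π s a * suppF (U s a) V₂)
          = ∑ s', (∑ a, π s a * pstar s a s') * (V₁ s' - V₂ s')) := by
  have key : ∀ s a, ∃ p, p ∈ U s a ∧
      suppF (U s a) V₁ - suppF (U s a) V₂ = ∑ s', p s' * (V₁ s' - V₂ s') := by
    intro s a
    obtain ⟨hne, hc, hconv, -⟩ := hU s a
    obtain ⟨p₁, hp₁, he₁, hm₁⟩ := suppF_isLeast hne hc V₁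
    obtain ⟨p₂, hp₂, he₂, hm₂⟩ := suppF_isLeast hne hc V₂
    have hcont : ContinuousOn (fun p : S → ℝ => ∑ s', p s' * (V₁ s' - V₂ s')) (U s a) :=
      (continuous_finset_sum _ fun s' _ =>
        (continuous_apply s').mul continuous_const).continuousOn
    have hsplit : ∀ p : S → ℝ, (∑ s', p s' * (V₁ s' - V₂ s'))
        = (∑ s', p s' * V₁ s') - ∑ s', p s' * V₂ s' := by
      intro p
      rw [← Finset.sum_sub_distrib]
      exact Finset.sum_congr rfl fun _ _ => by ring
    have h1 : (fun p : S → ℝ => ∑ s', p s' * (V₁ s' - V₂ s')) p₁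
        ≤ (fun _ : S → ℝ => suppF (U s a) V₁ - suppF (U s a) V₂) p₁ := by
      simp only [hsplit, he₁]
      have := hm₂ p₁ hp₁
      rw [he₂] at this  -- careful
      linarith
    have h2 : (fun _ : S → ℝ => suppF (U s a) V₁ - suppF (U s a) V₂) p₂
        ≤ (fun p : S → ℝ => ∑ s', p s' * (V₁ s' - V₂ s')) p₂ := by
      simp only [hsplit, he₂]
      have := hm₁ p₂ hp₂
      rw [he₁] at this
      linarith
    obtain ⟨p, hp, hval⟩ := hconv.isPreconnected.intermediate_value₂ hp₁ hp₂
      hcont continuousOn_const h1 h2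
    exact ⟨p, hp, hval.symm⟩
  choose pstar hmem hval using key
  refine ⟨pstar, hmem, hval, ?_⟩
  intro π hπ s
  rw [← Finset.sum_sub_distrib]
  have step : ∀ a, π s a * suppF (U s a) V₁ - π s a * suppF (U s a) V₂
      = ∑ s', π s a * (pstar s a s' * (V₁ s' - V₂ s')) := by
    intro a
    rw [← Finset.mul_sum, ← hval s a, mul_sub]
  simp_rw [step]
  rw [Finset.sum_comm]
  refine Finset.sum_congr rfl fun s' _ => ?_
  rw [Finset.sum_mul]
  exact Finset.sum_congr rfl fun a _ => (mul_assoc _ _ _).symm
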